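/- arXiv:1908.09343 — 3 statements merged into one kernel-verified Lean document; each statement's English description precedes it below -/
import Mathlib

section
/- If the ISC settlement declares the execution successful exactly when the set of dirty transactions is empty, and a transaction is dirty iff it is eligible to be opened (all its preconditions are in state correct) but its own state is not correct, then: the execution is declared successful if and only if every transaction in the dependency graph is in state correct, assuming the dependency graph is a finite DAG in which every transaction with all source predecessors correct becomes eligible. -/
inductive TxState : Type
  | unknown | init | inited | opn | opened | closed | correct
  deriving DecidableEq, Repr

/-- Over a finite DAG of transactions (predecessor relation `E` well-founded),
where a transaction is eligible iff all predecessors are `correct` and dirty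
iff it is eligible with non-`correct` state: the execution is declared
successful (no dirty transactions) iff every transaction is `correct`. -/
theorem isc_success_iff_all_correct {V : Type*} [Fintype V]
    (E : V → V → Prop) (hwf : WellFounded E)
    (state : V → TxState)
    (eligible : V → Prop)
    (heligible : ∀ v, eligible v ↔ ∀ u, E u v → state u = TxState.correct)
    (dirty : V → Prop)
    (hdirty : ∀ v, dirty v ↔ eligible v ∧ state v ≠ TxState.correct) :
    (∀ v, ¬ dirty v) ↔ (∀ v, state v = TxState.correct) := by
  constructor
  · intro h v
    induction v using hwf.induction with
    | _ v ih =>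
      by_contra hv
      exact h v ((hdirty v).2 ⟨(heligible v).2 ih, hv⟩)
  · intro h v hv
    exact ((hdirty v).1 hv).2 (h v)
end

section
/- Given a Merkle tree where each internal node's label is H(left label, right label) for a collision-resistant hash H, if two leaves at the same position produce valid authentication paths to the same root, then either the leaves are equal or a hash collision of H can be extracted from the two paths. -/
/-- Fold a hash function along a Merkle authentication path: each step hashes
the accumulator with the sibling, on the side given by the direction bit. -/
def merkleFold {α : Type*} (H : α × α → α) (x : α) (path : List (Bool × α)) : α :=
  path.foldl (fun acc step => if step.1 then H (step.2, acc) else H (acc, step.2)) x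

/-- If two leaves at the same position (paths of the same length with the same
directions at every step) both authenticate to the same Merkle root, then
either the leaves are equal or a collision of `H` can be extracted. -/
theorem merkle_binding {α : Type*} (H : α × α → α)
    (x₁ x₂ r : α) (p₁ p₂ : List (Bool × α))
    (hlen : p₁.length = p₂.length)
    (hdir : p₁.map Prod.fst = p₂.map Prod.fst)
    (h₁ : merkleFold H x₁ p₁ = r)
    (h₂ : merkleFold H x₂ p₂ = r) :
    x₁ = x₂ ∨ ∃ a b : α × α, a ≠ b ∧ H a = H b := by
  clear hlen
  induction p₁ generalizing p₂ x₁ x₂ r with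
  | nil =>
    cases p₂ with
    | nil => left; simpa [merkleFold] using h₁.trans h₂.symm
    | cons b t => simp at hdir
  | cons a t ih =>
    cases p₂ with
    | nil => simp at hdir
    | cons b t₂ =>
      simp only [List.map_cons, List.cons.injEq] at hdir
      obtain ⟨hd, ht⟩ := hdir
      simp only [merkleFold, List.foldl_cons] at h₁ h₂
      rcases ih _ _ _ _ ht h₁ h₂ with heq | hc
      · by_cases hb : a.1
        · simp [hb, ← hd] at heq
          by_cases hx : (a.2, x₁) = (b.2, x₂)
          · left; exact (Prod.ext_iff.mp hx).2
          · right; exact ⟨_, _, hx, heq⟩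
        · simp [hb, ← hd] at heq
          by_cases hx : (x₁, a.2) = (x₂, b.2)
          · left; exact (Prod.ext_iff.mp hx).1
          · right; exact ⟨_, _, hx, heq⟩
      · right; exact hc
end

section
/- If each of the two parties (VES and dApp client) in a UIP session follows the protocol honestly and every on-chain transaction achieves finality within a bounded number of NSB blocks b, and every transaction's deadline constraint allows at least b blocks, then (by induction on the DAG) every transaction in the dependency graph eventually reaches state correct, i.e., the execution is guaranteed to finish correctly. -/
/-- If both parties are honest — once all of a transaction's predecessors are
correct at height `h`, the transaction is correct by height `h + b` (finality
within `b` NSB blocks and every deadline allows at least `b` blocks) —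
then every transaction in the finite dependency DAG eventually reaches state
correct; indeed all are correct by height `b * (L + 1)` where `L` bounds the
depth (longest path length) of the DAG. -/
theorem honest_execution_finishes {V : Type*} [Fintype V]
    (E : V → V → Prop)
    (correctAt : ℕ → V → Prop)
    (hmono : ∀ h h' v, h ≤ h' → correctAt h v → correctAt h' v)
    (b : ℕ)
    (hstep : ∀ (h : ℕ) (v : V), (∀ u, E u v → correctAt h u) → correctAt (h + b) v)
    (depth : V → ℕ) (L : ℕ)
    (hdepth : ∀ u v, E u v → depth u < depth v)
    (hL : ∀ v, depth v ≤ L) :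
    ∃ H : ℕ, H ≤ b * (L + 1) ∧ ∀ v : V, correctAt H v := by
  have key : ∀ n (v : V), depth v ≤ n → correctAt (b * n + b) v := by
    intro n
    induction n with
    | zero =>
      intro v hv
      have h0 : correctAt (0 + b) v := hstep 0 v (fun u hu => by
        have := hdepth u v hu; omega)
      simpa using h0
    | succ n ih =>
      intro v hv
      rcases Nat.lt_or_ge (depth v) (n + 1) with h | h
      · exact hmono _ _ _ (by nlinarith) (ih v (by omega))
      · have : correctAt (b * (n + 1)) v → correctAt (b * (n+1) + b) v := fun hc =>
          hmono _ _ _ (by omega) hc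
        refine hstep (b * (n + 1)) v (fun u hu => ?_)
        have hu' : depth u ≤ n := by have := hdepth u v hu; omega
        exact hmono _ _ _ (by ring_nf; omega) (ih u hu')
  exact ⟨b * (L + 1), le_refl _, fun v => by
    have := key L v (hL v); simpa [Nat.mul_succ] using this⟩
end
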